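/- arXiv:2003.00362 — 2 statements merged into one kernel-verified Lean document; each statement's English description precedes it below -/
import Mathlib

section
/- In the recursive max-linear model with propagating noise, every sub-path of a random critical path is itself random critical: if p = [j → … → i] satisfies d̄_{ji}(p) = b̄_{ji} and k is an intermediate node of p, then the sub-paths p₁ from j to k and p₂ from k to i satisfy d̄_{jk}(p₁) = b̄_{jk} and d̄_{ki}(p₂) = b̄_{ki}. -/
open Matrix Finset MeasureTheory ProbabilityTheory Filter

noncomputable section

/-- Max-times (tropical) matrix product: `(F ⊙ G) i j = ⋁ k, F i k * G k j`. -/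
def mOdot {m n p : ℕ} (F : Matrix (Fin m) (Fin n) NNReal) (G : Matrix (Fin n) (Fin p) NNReal) :
    Matrix (Fin m) (Fin p) NNReal :=
  Matrix.of fun i j => Finset.univ.sup fun k => F i k * G k j

/-- Entrywise maximum of two matrices. -/
def mSup {m n : ℕ} (A B : Matrix (Fin m) (Fin n) NNReal) : Matrix (Fin m) (Fin n) NNReal :=
  Matrix.of fun i j => A i j ⊔ B i j

/-- Max-times power: `A^{⊙0} = I`, `A^{⊙(k+1)} = A^{⊙k} ⊙ A`. -/
def mPow {d : ℕ} (A : Matrix (Fin d) (Fin d) NNReal) : ℕ → Matrix (Fin d) (Fin d) NNReal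
  | 0 => 1
  | k + 1 => mOdot (mPow A k) A

/-- Kleene star: `B = ⋁_{k=0}^{d-1} C^{⊙k}`. -/
def kleene {d : ℕ} (C : Matrix (Fin d) (Fin d) NNReal) : Matrix (Fin d) (Fin d) NNReal :=
  Matrix.of fun i j => (Finset.range d).sup fun k => mPow C k i j

/-- `IsWalk C i j l` : `l` is the list of vertices after `i` of a walk from `i` to `j`
    along positive entries of `C`. -/
def IsWalk {d : ℕ} (C : Matrix (Fin d) (Fin d) NNReal) : Fin d → Fin d → List (Fin d) → Prop
  | i, j, [] => i = j
  | i, j, k :: l => 0 < C i k ∧ IsWalk C k j l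

/-- Deterministic path weight: product of edge weights along a walk. -/
def walkWeight {d : ℕ} (C : Matrix (Fin d) (Fin d) NNReal) : Fin d → List (Fin d) → NNReal
  | _, [] => 1
  | i, k :: l => C i k * walkWeight C k l

/-- Acyclicity: the only walk from a vertex to itself is the empty one. -/
def Acyclic {d : ℕ} (C : Matrix (Fin d) (Fin d) NNReal) : Prop :=
  ∀ i l, IsWalk C i i l → l = []

/-- Non-noisy ML coefficient: maximal deterministic path weight from `j` to `i`
    (`1` on the diagonal; `0` if there is no path). -/
def detB {d : ℕ} (C : Matrix (Fin d) (Fin d) NNReal) (j i : Fin d) : NNReal :=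
  sSup {w | ∃ l, IsWalk C j i l ∧ w = walkWeight C j l}

/-- Noisy path weight (without the initial noise factor `ε j`):
    `∏_l c_{k_l k_{l+1}} ε_{k_{l+1}}` along a walk. -/
def noisyWeight {d : ℕ} (C : Matrix (Fin d) (Fin d) NNReal) (ε : Fin d → NNReal) :
    Fin d → List (Fin d) → NNReal
  | _, [] => 1
  | i, k :: l => C i k * ε k * noisyWeight C ε k l

/-- Random (noisy) ML coefficient `b̄_{ji}`: maximal random path weight
    `d̄_{ji}(p) = ε_j ∏ c ε` from `j` to `i`; equals `ε j` on the diagonal,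
    `0` if `j` is not an ancestor of `i`. -/
def barB {d : ℕ} (C : Matrix (Fin d) (Fin d) NNReal) (ε : Fin d → NNReal) (j i : Fin d) :
    NNReal :=
  sSup {w | ∃ l, IsWalk C j i l ∧ w = ε j * noisyWeight C ε j l}

/-- `j` is a strict ancestor of `i` (there exists a nonempty path). -/
def Reach {d : ℕ} (C : Matrix (Fin d) (Fin d) NNReal) (j i : Fin d) : Prop :=
  ∃ l, l ≠ [] ∧ IsWalk C j i l

/-- Max-times product of a row vector with a matrix. -/
def vOdot {d : ℕ} (x : Fin d → NNReal) (A : Matrix (Fin d) (Fin d) NNReal) : Fin d → NNReal :=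
  fun j => Finset.univ.sup fun k => x k * A k j

/-- Componentwise maximum of two vectors. -/
def vSup {d : ℕ} (x y : Fin d → NNReal) : Fin d → NNReal := fun i => x i ⊔ y i

/-- Maximum of `f k` over all `k` satisfying `P` (0 if there is none). -/
def supOver {d : ℕ} (P : Fin d → Prop) (f : Fin d → NNReal) : NNReal :=
  sSup {w | ∃ k, P k ∧ w = f k}

end


section Aux

variable {d : ℕ} (C : Matrix (Fin d) (Fin d) NNReal) (ε : Fin d → NNReal)

lemma isWalk_append {j k i : Fin d} {l₁ l₂ : List (Fin d)}
    (h₁ : IsWalk C j k l₁) (h₂ : IsWalk C k i l₂) : IsWalk C j i (l₁ ++ l₂) := by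
  induction l₁ generalizing j with
  | nil => cases h₁; simpa using h₂
  | cons a t ih => exact ⟨h₁.1, ih h₁.2⟩

lemma noisyWeight_append {j k : Fin d} {l₁ : List (Fin d)} (l₂ : List (Fin d))
    (h₁ : IsWalk C j k l₁) :
    noisyWeight C ε j (l₁ ++ l₂) = noisyWeight C ε j l₁ * noisyWeight C ε k l₂ := by
  induction l₁ generalizing j with
  | nil => cases h₁; simp [noisyWeight]
  | cons a t ih =>
    simp only [List.cons_append, noisyWeight]
    rw [ih h₁.2]
    ring

lemma noisyWeight_pos (hε : ∀ k, 1 ≤ ε k) {j i : Fin d} {l : List (Fin d)}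
    (h : IsWalk C j i l) : 0 < noisyWeight C ε j l := by
  induction l generalizing j with
  | nil => simp [noisyWeight]
  | cons a t ih =>
    have := ih h.2
    have hεa : 0 < ε a := lt_of_lt_of_le one_pos (hε a)
    simpa [noisyWeight] using mul_pos (mul_pos h.1 hεa) this

lemma exists_walk_to_mem {x y jv : Fin d} {l : List (Fin d)}
    (h : IsWalk C x y l) (hm : jv ∈ l) : ∃ l', l' ≠ [] ∧ IsWalk C x jv l' := by
  induction l generalizing x with
  | nil => simp at hm
  | cons a t ih =>
    rcases List.mem_cons.mp hm with rfl | hm'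
    · exact ⟨[jv], by simp, h.1, rfl⟩
    · obtain ⟨l', hne, hw⟩ := ih h.2 hm'
      exact ⟨a :: l', by simp, h.1, hw⟩

lemma walk_nodup (hacyc : Acyclic C) {x y : Fin d} {l : List (Fin d)}
    (h : IsWalk C x y l) : (x :: l).Nodup := by
  induction l generalizing x with
  | nil => simp
  | cons a t ih =>
    have hn : (a :: t).Nodup := ih h.2
    refine List.nodup_cons.mpr ⟨?_, hn⟩
    intro hx
    obtain ⟨l', hne, hw⟩ := exists_walk_to_mem C h hx
    exact hne (hacyc x l' hw)

lemma bddAbove_walkSet (hacyc : Acyclic C) (j i : Fin d) :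
    BddAbove {w | ∃ l, IsWalk C j i l ∧ w = ε j * noisyWeight C ε j l} := by
  have hfin : {l : List (Fin d) | IsWalk C j i l}.Finite := by
    apply Set.Finite.subset (List.finite_length_le (Fin d) d)
    intro l hl
    have := (walk_nodup C hacyc hl).length_le_card
    simpa using Nat.le_of_succ_le (by simpa using this)
  have : {w | ∃ l, IsWalk C j i l ∧ w = ε j * noisyWeight C ε j l}
      = (fun l => ε j * noisyWeight C ε j l) '' {l | IsWalk C j i l} := by
    ext w; constructor
    · rintro ⟨l, hw, rfl⟩; exact ⟨l, hw, rfl⟩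
    · rintro ⟨l, hw, rfl⟩; exact ⟨l, hw, rfl⟩
  rw [this]
  exact (hfin.image _).bddAbove

end Aux

/-- every sub-path of a random critical path is itself random critical. -/
theorem subpath_of_critical_is_critical (d : ℕ) (C : Matrix (Fin d) (Fin d) NNReal)
    (ε : Fin d → NNReal) (hacyc : Acyclic C) (hε : ∀ k, 1 ≤ ε k)
    (j i k : Fin d) (l₁ l₂ : List (Fin d)) (hne₁ : l₁ ≠ []) (hne₂ : l₂ ≠ [])
    (h₁ : IsWalk C j k l₁) (h₂ : IsWalk C k i l₂)
    (hcrit : ε j * noisyWeight C ε j (l₁ ++ l₂) = barB C ε j i) :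
    ε j * noisyWeight C ε j l₁ = barB C ε j k ∧
    ε k * noisyWeight C ε k l₂ = barB C ε k i := by
  set S := fun (a b : Fin d) => {w | ∃ l, IsWalk C a b l ∧ w = ε a * noisyWeight C ε a l} with hS
  have hεpos : ∀ m : Fin d, 0 < ε m := fun m => lt_of_lt_of_le one_pos (hε m)
  have hbdd : ∀ a b, BddAbove (S a b) := fun a b => bddAbove_walkSet C ε hacyc a b
  have hfac : noisyWeight C ε j (l₁ ++ l₂)
      = noisyWeight C ε j l₁ * noisyWeight C ε k l₂ := noisyWeight_append C ε l₂ h₁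
  have hmax : ∀ l, IsWalk C j i l → ε j * noisyWeight C ε j l ≤ ε j * noisyWeight C ε j (l₁ ++ l₂) := by
    intro l hl
    rw [hcrit]
    exact le_csSup (hbdd j i) ⟨l, hl, rfl⟩
  constructor
  · have hle : ε j * noisyWeight C ε j l₁ ≤ barB C ε j k :=
      le_csSup (hbdd j k) ⟨l₁, h₁, rfl⟩
    rcases lt_or_eq_of_le hle with hlt | he
    · exfalso
      rw [barB] at hlt
      obtain ⟨w, ⟨l₁', h₁', rfl⟩, hw⟩ :=
        exists_lt_of_lt_csSup (show Set.Nonempty {w | ∃ l, IsWalk C j k l ∧ w = ε j * noisyWeight C ε j l} from ⟨_, l₁, h₁, rfl⟩) hlt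
      have hkey := hmax (l₁' ++ l₂) (isWalk_append C h₁' h₂)
      rw [noisyWeight_append C ε l₂ h₁', hfac, ← mul_assoc, ← mul_assoc] at hkey
      have hpos₂ : 0 < noisyWeight C ε k l₂ := noisyWeight_pos C ε hε h₂
      exact absurd hkey (not_le_of_gt (mul_lt_mul_of_pos_right hw hpos₂))
    · exact he
  · have hle : ε k * noisyWeight C ε k l₂ ≤ barB C ε k i :=
      le_csSup (hbdd k i) ⟨l₂, h₂, rfl⟩
    rcases lt_or_eq_of_le hle with hlt | he
    · exfalso
      rw [barB] at hlt
      obtain ⟨w, ⟨l₂', h₂', rfl⟩, hw⟩ :=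
        exists_lt_of_lt_csSup (show Set.Nonempty {w | ∃ l, IsWalk C k i l ∧ w = ε k * noisyWeight C ε k l} from ⟨_, l₂, h₂, rfl⟩) hlt
      have hw' : noisyWeight C ε k l₂ < noisyWeight C ε k l₂' :=
        lt_of_mul_lt_mul_left hw zero_le
      have hkey := hmax (l₁ ++ l₂') (isWalk_append C h₁ h₂')
      rw [noisyWeight_append C ε l₂' h₁, hfac, ← mul_assoc, ← mul_assoc] at hkey
      have hpos₁ : 0 < ε j * noisyWeight C ε j l₁ :=
        mul_pos (hεpos j) (noisyWeight_pos C ε hε h₁)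
      exact absurd hkey (not_le_of_gt (mul_lt_mul_of_pos_left hw' hpos₁))
    · exact he
end

section
/- Let U be a recursive max-linear vector with propagating noise on a DAG D. Then for every node i and every j ∈ An(i), U_i / U_j ≥ b̄_{ji} / b̄_{jj} ≥ b_{ji}, where b_{ji} is the non-noisy max-linear coefficient (the maximal deterministic path weight from j to i). -/
open Matrix Finset MeasureTheory ProbabilityTheory Filter

lemma walk_le_noisy {d : ℕ} (C : Matrix (Fin d) (Fin d) NNReal) (ε : Fin d → NNReal)
    (hε : ∀ k, 1 ≤ ε k) : ∀ (l : List (Fin d)) (j : Fin d),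
    walkWeight C j l ≤ noisyWeight C ε j l := by
  intro l
  induction l with
  | nil => intro j; simp [walkWeight, noisyWeight]
  | cons k l ih =>
    intro j
    simp only [walkWeight, noisyWeight]
    calc C j k * walkWeight C k l ≤ C j k * noisyWeight C ε k l :=
          mul_le_mul_right (ih k) _
      _ ≤ C j k * ε k * noisyWeight C ε k l := by
          rw [mul_assoc]
          exact mul_le_mul_right (le_mul_of_one_le_left zero_le (hε k)) _

lemma U_walk {d : ℕ} (C : Matrix (Fin d) (Fin d) NNReal) (Z ε U : Fin d → NNReal)
    (hU : ∀ i, U i = ((Finset.univ.sup fun k => C k i * U k) ⊔ Z i) * ε i) :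
    ∀ (l : List (Fin d)) (j i : Fin d), IsWalk C j i l →
    U j * noisyWeight C ε j l ≤ U i := by
  intro l
  induction l with
  | nil =>
    intro j i h
    cases h
    simp [noisyWeight]
  | cons k l ih =>
    intro j i h
    obtain ⟨_, hw⟩ := h
    have hk : C j k * U j * ε k ≤ U k := by
      rw [hU k]
      refine mul_le_mul_left (le_sup_of_le_left ?_) _
      exact Finset.le_sup (f := fun k' => C k' k * U k') (Finset.mem_univ j)
    calc U j * noisyWeight C ε j (k :: l)
        = (C j k * U j * ε k) * noisyWeight C ε k l := by
          simp only [noisyWeight]; ring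
      _ ≤ U k * noisyWeight C ε k l := mul_le_mul_left hk _
      _ ≤ U i := ih k i hw

lemma U_pos {d : ℕ} (C : Matrix (Fin d) (Fin d) NNReal) (Z ε U : Fin d → NNReal)
    (hZ : ∀ k, 0 < Z k) (hε : ∀ k, 1 ≤ ε k)
    (hU : ∀ i, U i = ((Finset.univ.sup fun k => C k i * U k) ⊔ Z i) * ε i)
    (j : Fin d) : 0 < U j := by
  rw [hU j]
  have h1 : 0 < ε j := lt_of_lt_of_le zero_lt_one (hε j)
  exact mul_pos (lt_of_lt_of_le (hZ j) le_sup_right) h1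

lemma barB_diag {d : ℕ} (C : Matrix (Fin d) (Fin d) NNReal) (ε : Fin d → NNReal)
    (hacyc : Acyclic C) (j : Fin d) : barB C ε j j = ε j := by
  have hset : {w | ∃ l, IsWalk C j j l ∧ w = ε j * noisyWeight C ε j l} = {ε j} := by
    ext w
    constructor
    · rintro ⟨l, hw, rfl⟩
      have := hacyc j l hw
      subst this
      simp [noisyWeight]
    · rintro rfl
      exact ⟨[], rfl, by simp [noisyWeight]⟩
  rw [barB, hset, csSup_singleton]

/-- for a recursive ML vector with propagating noise and `j ∈ An(i)`,
`U_i / U_j ≥ b̄_{ji} / b̄_{jj} ≥ b_{ji}` (note `b̄_{jj} = ε_j`). -/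
theorem ratio_lower_bounds (d : ℕ) (C : Matrix (Fin d) (Fin d) NNReal)
    (Z ε U : Fin d → NNReal) (hacyc : Acyclic C) (hZ : ∀ k, 0 < Z k) (hε : ∀ k, 1 ≤ ε k)
    (hU : ∀ i, U i = ((Finset.univ.sup fun k => C k i * U k) ⊔ Z i) * ε i)
    (j i : Fin d) (hAn : j = i ∨ Reach C j i) :
    detB C j i ≤ barB C ε j i / barB C ε j j ∧
    barB C ε j i / barB C ε j j ≤ U i / U j := by
  have hεj : (0:NNReal) < ε j := lt_of_lt_of_le zero_lt_one (hε j)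
  have hUj : 0 < U j := U_pos C Z ε U hZ hε hU j
  rw [barB_diag C ε hacyc j]
  -- a nonempty witness walk from j to i
  obtain ⟨l₀, hl₀⟩ : ∃ l, IsWalk C j i l := by
    rcases hAn with rfl | ⟨l, _, hl⟩
    · exact ⟨[], rfl⟩
    · exact ⟨l, hl⟩
  have hne : {w | ∃ l, IsWalk C j i l ∧ w = ε j * noisyWeight C ε j l}.Nonempty :=
    ⟨_, l₀, hl₀, rfl⟩
  have hneD : {w | ∃ l, IsWalk C j i l ∧ w = walkWeight C j l}.Nonempty :=
    ⟨_, l₀, hl₀, rfl⟩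
  -- every element of the noisy set is ≤ ε j * (U i / U j)
  have hbdd : ∀ w ∈ {w | ∃ l, IsWalk C j i l ∧ w = ε j * noisyWeight C ε j l},
      w ≤ ε j * (U i / U j) := by
    rintro w ⟨l, hl, rfl⟩
    refine mul_le_mul_right ?_ _
    rw [le_div_iff₀ hUj]
    rw [mul_comm]
    exact U_walk C Z ε U hU l j i hl
  have hBddAbove : BddAbove {w | ∃ l, IsWalk C j i l ∧ w = ε j * noisyWeight C ε j l} :=
    ⟨ε j * (U i / U j), hbdd⟩
  constructor
  · -- detB ≤ barB / ε j
    refine csSup_le hneD ?_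
    rintro w ⟨l, hl, rfl⟩
    rw [le_div_iff₀ hεj]
    have hmem : ε j * noisyWeight C ε j l ∈
        {w | ∃ l, IsWalk C j i l ∧ w = ε j * noisyWeight C ε j l} := ⟨l, hl, rfl⟩
    calc walkWeight C j l * ε j = ε j * walkWeight C j l := mul_comm _ _
      _ ≤ ε j * noisyWeight C ε j l := mul_le_mul_right (walk_le_noisy C ε hε l j) _
      _ ≤ barB C ε j i := le_csSup hBddAbove hmem
  · -- barB / ε j ≤ U i / U j
    rw [div_le_iff₀ hεj]
    refine csSup_le hne ?_
    rintro w hw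
    calc w ≤ ε j * (U i / U j) := hbdd w hw
      _ = U i / U j * ε j := mul_comm _ _
end
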